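/- Let μ be a singular cardinal, let ⟨μ_i : i < cf(μ)⟩ be a strictly increasing sequence of regular cardinals cofinal in μ, and set A = {μ_i : i < cf(μ)}. Suppose ⟨f_ν : ν < ρ⟩ is a sequence of functions in ∏A that is increasing and cofinal modulo the ideal of bounded subsets of A (for ν < ν' there is i₀ < cf(μ) with f_ν(μ_i) < f_{ν'}(μ_i) for all i ≥ i₀, and for every g ∈ ∏A there are ν < ρ and i₀ < cf(μ) with g(μ_i) ≤ f_ν(μ_i) for all i ≥ i₀), where ρ is a regular cardinal. Then ρ ∈ spec*(A). -/

import Mathlib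

universe u

open Cardinal Set

namespace TukeySpec

/-- A subset `S` of a preorder is cofinal if every element has an upper bound in `S`. -/
def IsCofinal {P : Type*} [Preorder P] (S : Set P) : Prop :=
  ∀ p : P, ∃ s ∈ S, p ≤ s

/-- `Q` is a Tukey quotient of `P` (i.e. `P ≥_T Q`): there is a map `P → Q`
sending cofinal sets to cofinal sets. -/
def TukeyQuot (P : Type*) (Q : Type*) [Preorder P] [Preorder Q] : Prop :=
  ∃ φ : P → Q, ∀ S : Set P, IsCofinal S → IsCofinal (φ '' S)

/-- `P` has calibre `(κ, l, m)`. -/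
def Calibre (P : Type u) [Preorder P] (κ l m : Cardinal.{u}) : Prop :=
  ∀ P' : Set P, #P' = κ → ∃ R ⊆ P', #R = l ∧ ∀ B ⊆ R, #B = m → BddAbove B

/-- `P` has calibre `κ` (the simplified form): every `κ`-sized subset has a
`κ`-sized subset which is bounded in `P`. -/
def CalibreSimple (P : Type u) [Preorder P] (κ : Cardinal.{u}) : Prop :=
  ∀ P' : Set P, #P' = κ → ∃ R ⊆ P', #R = κ ∧ BddAbove R

/-- The Tukey spectrum of a poset: all regular cardinals `κ` with `P ≥_T κ`,
where `κ` carries its usual (ordinal) ordering. -/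
def specPoset (P : Type u) [Preorder P] : Set Cardinal.{u} :=
  {κ | κ.IsRegular ∧ TukeyQuot P ↥(Set.Iio κ.ord)}

/-- The product `∏A` of a set of cardinals: all functions on `A` with
`f a < a` (as ordinals). -/
def piSet (A : Set Cardinal.{0}) : Set (↥A → Ordinal.{0}) :=
  {f | ∀ a : ↥A, f a < (a : Cardinal).ord}

/-- A family of members of `∏A` is bounded if it has an upper bound in `(∏A, ≤)`
(pointwise order). -/
def BddIn (A : Set Cardinal.{0}) (S : Set (↥A → Ordinal.{0})) : Prop :=
  ∃ h ∈ piSet A, ∀ f ∈ S, ∀ a : ↥A, f a ≤ h a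

/-- The Tukey spectrum of a set `A` of regular cardinals: all regular `κ` for which
there is a `κ`-sized family `F ⊆ ∏A` all of whose `κ`-sized subfamilies are
unbounded in `(∏A, ≤)`. -/
def spec (A : Set Cardinal.{0}) : Set Cardinal.{0} :=
  {κ | κ.IsRegular ∧ ∃ F ⊆ piSet A, #F = Cardinal.lift.{1} κ ∧
    ∀ F₀ ⊆ F, #F₀ = Cardinal.lift.{1} κ → ¬ BddIn A F₀}

/-- `cf(∏A/D)`: the least cardinality of a subset of `∏A` which is cofinal
modulo the ultrafilter `D`. -/
noncomputable def cofUlt (A : Set Cardinal.{0}) (D : Ultrafilter ↥A) : Cardinal.{1} :=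
  sInf {c : Cardinal.{1} | ∃ S ⊆ piSet A, #S = c ∧
    ∀ f ∈ piSet A, ∃ g ∈ S, {a : ↥A | f a ≤ g a} ∈ D}

/-- `pcf(A)`: the set of all cofinalities `cf(∏A/D)` as `D` ranges over
ultrafilters on `A`. -/
def pcf (A : Set Cardinal.{0}) : Set Cardinal.{0} :=
  {κ | ∃ D : Ultrafilter ↥A, Cardinal.lift.{1} κ = cofUlt A D}

/-- `ub(F)`: the set of coordinates `a ∈ A` where the family `F` is unbounded. -/
def ub (A : Set Cardinal.{0}) (F : Set (↥A → Ordinal.{0})) : Set ↥A :=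
  {a | ∀ β < (a : Cardinal).ord, ∃ f ∈ F, β < f a}

/-- The strong part of the Tukey spectrum: `l ∈ spec*(A)` iff there is an
`l`-sized family `F ⊆ ∏A` such that every `l`-sized subfamily has a set of
unbounded coordinates which is unbounded in `sup A`. -/
def specStarMem (A : Set Cardinal.{0}) (l : Cardinal.{0}) : Prop :=
  l.IsRegular ∧ ∃ F ⊆ piSet A, #F = Cardinal.lift.{1} l ∧
    ∀ F₀ ⊆ F, #F₀ = Cardinal.lift.{1} l →
      ∀ β < sSup A, ∃ a ∈ ub A F₀, β < (a : Cardinal)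

/-- `κ` is a limit point of the set `X` of cardinals. -/
def IsLimitPt (X : Set Cardinal.{0}) (κ : Cardinal.{0}) : Prop :=
  ∀ β < κ, ∃ x ∈ X, β < x ∧ x < κ

/-- `C` is a closed unbounded subset of `κ`. -/
def IsClubIn (C : Set Ordinal.{0}) (κ : Ordinal.{0}) : Prop :=
  C ⊆ Set.Iio κ ∧ (∀ β < κ, ∃ o ∈ C, β < o) ∧
    ∀ β < κ, β ≠ 0 → (∀ γ < β, ∃ o ∈ C, γ < o ∧ o < β) → β ∈ C

/-- A set `S` of cardinals is stationary in `κ`: it meets every club of `κ`. -/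
def StatIn (S : Set Cardinal.{0}) (κ : Cardinal.{0}) : Prop :=
  ∀ C : Set Ordinal.{0}, IsClubIn C κ.ord → ∃ a ∈ S, a.ord ∈ C

/-- `κ` is Mahlo: strongly inaccessible and the regular cardinals below `κ`
are stationary in `κ`. -/
def IsMahlo (κ : Cardinal.{0}) : Prop :=
  κ.IsInaccessible ∧ StatIn {a | a < κ ∧ a.IsRegular} κ

/-- `κ` is weakly compact: strongly inaccessible and `κ → (κ)²₂`. -/
def IsWeaklyCompact (κ : Cardinal.{0}) : Prop :=
  κ.IsInaccessible ∧
    ∀ c : Ordinal.{0} → Ordinal.{0} → Bool,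
      ∃ H ⊆ Set.Iio κ.ord, #H = Cardinal.lift.{1} κ ∧
        ∃ b : Bool, ∀ α ∈ H, ∀ β ∈ H, α < β → c α β = b

/-- `θ` carries a Jónsson algebra: there is `F` from finite subsets of `θ` to `θ`
such that `F` applied to finite subsets of any `θ`-sized `H ⊆ θ` covers `θ`. -/
def CarriesJonsson (θ : Cardinal.{0}) : Prop :=
  ∃ F : Finset Ordinal.{0} → Ordinal.{0},
    (∀ s : Finset Ordinal.{0}, (↑s : Set Ordinal) ⊆ Set.Iio θ.ord → F s < θ.ord) ∧
    ∀ H ⊆ Set.Iio θ.ord, #H = Cardinal.lift.{1} θ →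
      ∀ γ < θ.ord, ∃ s : Finset Ordinal.{0}, (↑s : Set Ordinal) ⊆ H ∧ F s = γ

/-- `cf(∏A/J_bd)`: the least cardinality of a subset of `∏A` cofinal modulo
the ideal of bounded subsets of `A`. -/
noncomputable def cofJbd (A : Set Cardinal.{0}) : Cardinal.{1} :=
  sInf {c : Cardinal.{1} | ∃ S ⊆ piSet A, #S = c ∧
    ∀ f ∈ piSet A, ∃ g ∈ S, ∃ b < sSup A, ∀ a : ↥A, b < (a : Cardinal) → f a ≤ g a}

/-- `μ` is a limit cardinal. -/
def IsLimitCard (μ : Cardinal.{0}) : Prop :=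
  ℵ₀ ≤ μ ∧ ∀ ν < μ, Order.succ ν < μ

/-- If `⟨m i : i < cf(μ)⟩` is a strictly increasing sequence of
regular cardinals cofinal in the singular cardinal `μ`, `A` is its range, and
`⟨f ν : ν < ρ⟩` is increasing and cofinal in `∏A` modulo the ideal of bounded
subsets of `A`, with `ρ` regular, then `ρ ∈ spec*(A)`. -/
theorem statement17 (μ : Cardinal.{0}) (hinf : ℵ₀ ≤ μ) (hsing : ¬ μ.IsRegular)
    (m : Ordinal.{0} → Cardinal.{0})
    (hmreg : ∀ i < μ.ord.cof.ord, (m i).IsRegular)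
    (hmono : ∀ i j : Ordinal.{0}, i < j → j < μ.ord.cof.ord → m i < m j)
    (hmlt : ∀ i < μ.ord.cof.ord, m i < μ)
    (hmcof : ∀ ν < μ, ∃ i < μ.ord.cof.ord, ν < m i)
    (A : Set Cardinal.{0}) (hA : A = {a | ∃ i < μ.ord.cof.ord, a = m i})
    (ρ : Cardinal.{0}) (hρ : ρ.IsRegular)
    (f : Ordinal.{0} → (↥A → Ordinal.{0}))
    (hmem : ∀ ν < ρ.ord, f ν ∈ piSet A)
    (hincr : ∀ ν ν' : Ordinal.{0}, ν < ν' → ν' < ρ.ord →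
      ∃ b < μ, ∀ a : ↥A, b ≤ (a : Cardinal) → f ν a < f ν' a)
    (hcofinal : ∀ g ∈ piSet A, ∃ ν < ρ.ord, ∃ b < μ,
      ∀ a : ↥A, b ≤ (a : Cardinal) → g a ≤ f ν a) :
    specStarMem A ρ := by
  have hρ0 : ℵ₀ ≤ ρ := hρ.aleph0_le
  have hρlim : Order.IsSuccLimit ρ.ord := Cardinal.isSuccLimit_ord hρ0
  -- every element of A is regular
  have hAreg : ∀ a : ↥A, (a : Cardinal).IsRegular := by
    rintro ⟨a, ha⟩
    rw [hA] at ha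
    obtain ⟨i, hi, rfl⟩ := ha
    exact hmreg i hi
  have hAlt : ∀ a : ↥A, (a : Cardinal) < μ := by
    rintro ⟨a, ha⟩
    rw [hA] at ha
    obtain ⟨i, hi, rfl⟩ := ha
    exact hmlt i hi
  -- for any b < μ there is a ∈ A above b
  have hup : ∀ b < μ, ∃ a : ↥A, b < (a : Cardinal) := by
    intro b hb
    obtain ⟨i, hi, hbi⟩ := hmcof b hb
    exact ⟨⟨m i, by rw [hA]; exact ⟨i, hi, rfl⟩⟩, hbi⟩
  have hsupA : sSup A ≤ μ := by
    obtain ⟨a, _⟩ := hup 0 (lt_of_lt_of_le aleph0_pos hinf)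
    exact csSup_le ⟨a, a.2⟩ (fun b hb => le_of_lt (hAlt ⟨b, hb⟩))
  -- f is injective on Iio ρ.ord
  have hne : ∀ ν ν' : Ordinal, ν < ν' → ν' < ρ.ord → f ν ≠ f ν' := by
    intro ν ν' hlt hlt' heq
    obtain ⟨b, hb, hba⟩ := hincr ν ν' hlt hlt'
    obtain ⟨a, ha⟩ := hup b hb
    have := hba a ha.le
    rw [heq] at this
    exact lt_irrefl _ this
  have hinj : Set.InjOn f (Set.Iio ρ.ord) := by
    intro ν hν ν' hν' heq
    rcases lt_trichotomy ν ν' with h | h | h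
    · exact absurd heq (hne ν ν' h hν')
    · exact h
    · exact absurd heq.symm (hne ν' ν h hν)
  refine ⟨hρ, f '' Set.Iio ρ.ord, ?_, ?_, ?_⟩
  · rintro x ⟨ν, hν, rfl⟩
    exact hmem ν hν
  · rw [Cardinal.mk_image_eq_of_injOn _ _ hinj, Ordinal.mk_Iio_ordinal,
      Cardinal.card_ord]
  intro F₀ hF₀ hcard β hβ
  by_contra hcon
  push_neg at hcon
  have hβμ : β < μ := lt_of_lt_of_le hβ hsupA
  -- choose bounds
  have hch : ∀ a : ↥A, β < (a : Cardinal) →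
      ∃ γ, γ < (a : Cardinal).ord ∧ ∀ x ∈ F₀, x a ≤ γ := by
    intro a haβ
    have hnub : a ∉ ub A F₀ := fun h => absurd (hcon a h) (not_le.mpr haβ)
    simp only [ub, Set.mem_setOf_eq] at hnub
    push_neg at hnub
    obtain ⟨γ, hγ, hγ'⟩ := hnub
    exact ⟨γ, hγ, fun x hx => hγ' x hx⟩
  classical
  set g : ↥A → Ordinal := fun a =>
    if h : β < (a : Cardinal) then (hch a h).choose + 1 else 0 with hg
  have hglt : g ∈ piSet A := by
    intro a
    have halim : Order.IsSuccLimit ((a : Cardinal).ord) :=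
      Cardinal.isSuccLimit_ord (hAreg a).aleph0_le
    by_cases h : β < (a : Cardinal)
    · simp only [hg, dif_pos h]
      exact halim.succ_lt (hch a h).choose_spec.1
    · simp only [hg, dif_neg h]
      exact halim.pos
  obtain ⟨ν', hν', b, hb, hbnd⟩ := hcofinal g hglt
  -- the index set of F₀ is cofinal in ρ.ord
  have hNcof : ∃ ν, (ν < ρ.ord ∧ f ν ∈ F₀) ∧ ν' < ν := by
    by_contra hN
    push_neg at hN
    have hsub : F₀ ⊆ f '' (Set.Iio (ν' + 1)) := by
      intro x hx
      obtain ⟨ν, hν, rfl⟩ := hF₀ hx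
      have := hN ν ⟨hν, hx⟩
      exact ⟨ν, Order.lt_succ_iff.mpr this, rfl⟩
    have h1 : #F₀ ≤ #(f '' (Set.Iio (ν' + 1))) := Cardinal.mk_le_mk_of_subset hsub
    have h2 : #(f '' (Set.Iio (ν' + 1))) ≤ #(Set.Iio (ν' + 1)) := Cardinal.mk_image_le
    rw [hcard, Ordinal.mk_Iio_ordinal] at *
    have h3 : (ν' + 1).card < ρ := Cardinal.lt_ord.mp (hρlim.succ_lt hν')
    have := (h1.trans h2).trans_lt (Cardinal.lift_strictMono h3)
    exact lt_irrefl _ this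
  obtain ⟨ν, ⟨hνρ, hνF₀⟩, hν'ν⟩ := hNcof
  obtain ⟨b', hb', hincr'⟩ := hincr ν' ν hν'ν hνρ
  -- pick a large coordinate
  obtain ⟨a, ha⟩ := hup (max (max b b') β) (by
    simp only [max_lt_iff]
    exact ⟨⟨hb, hb'⟩, hβμ⟩)
  simp only [max_lt_iff] at ha
  obtain ⟨⟨hab, hab'⟩, haβ⟩ := ha
  have h1 : g a ≤ f ν' a := hbnd a hab.le
  have h2 : f ν' a < f ν a := hincr' a hab'.le
  have h3 : f ν a ≤ (hch a haβ).choose := (hch a haβ).choose_spec.2 _ hνF₀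
  have h4 : g a = (hch a haβ).choose + 1 := dif_pos haβ
  rw [h4] at h1
  have h5 := (h1.trans_lt h2).trans_le h3
  exact lt_irrefl _ (lt_of_le_of_lt (le_self_add (a := _) (b := 1)) h5)


end TukeySpec
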